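/- With A a bilinear connection on a Lie algebra 𝔤*, define the covariant derivative of the curvature (∇_α R)(β,γ)δ = A_α(R(β,γ)δ) − R(A_α β, γ)δ − R(β, A_α γ)δ − R(β,γ)(A_α δ). Let B be the lifted connection on 𝔤* ⋉ 𝔤* and R^B its curvature. Then (∇^B_{(α,β)} R^B)((α',β'),(α'',β''))(α''',β''') = ((∇_α R)(β',β'')β''' + (∇_β R)(α',β'')β''' + (∇_β R)(β',α'')β''' + (∇_β R)(β',β'')α''', (∇_β R)(β',β'')β'''). -/
import Mathlib
set_option maxHeartbeats 2000000


/-- The covariant derivative of the curvature of the lifted connection `B` on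
`𝔤* ⋉ 𝔤*` is expressed in terms of the covariant derivative of the curvature
of `A`. -/
theorem lifted_connection_nabla_curvature
    (L : Type*) [LieRing L] [LieAlgebra ℝ L]
    (A : L →ₗ[ℝ] L →ₗ[ℝ] L) :
    let R : L → L → L → L :=
      fun α β γ => A α (A β γ) - A β (A α γ) - A ⁅α, β⁆ γ
    let nablaR : L → L → L → L → L :=
      fun α β γ δ =>
        A α (R β γ δ) - R (A α β) γ δ - R β (A α γ) δ - R β γ (A α δ)
    let br : L × L → L × L → L × L :=
      fun p q => (⁅p.1, q.2⁆ + ⁅p.2, q.1⁆, ⁅p.2, q.2⁆)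
    let B : L × L → L × L → L × L :=
      fun p q => (A p.1 q.2 + A p.2 q.1, A p.2 q.2)
    let RB : L × L → L × L → L × L → L × L :=
      fun p q r => B p (B q r) - B q (B p r) - B (br p q) r
    let nablaRB : L × L → L × L → L × L → L × L → L × L :=
      fun p q r s =>
        B p (RB q r s) - RB (B p q) r s - RB q (B p r) s - RB q r (B p s)
    ∀ p q r s : L × L,
      nablaRB p q r s =
        (nablaR p.1 q.2 r.2 s.2 + nablaR p.2 q.1 r.2 s.2 +
           nablaR p.2 q.2 r.1 s.2 + nablaR p.2 q.2 r.2 s.1,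
         nablaR p.2 q.2 r.2 s.2) := by
  intro R nablaR br B RB nablaRB p q r s
  simp only [nablaRB, RB, nablaR, R, br, B, Prod.mk_add_mk, Prod.mk_sub_mk,
    Prod.fst_add, Prod.snd_add, Prod.fst_sub, Prod.snd_sub]
  refine Prod.ext ?_ ?_ <;>
  · simp only [LinearMap.add_apply, LinearMap.sub_apply, map_add, map_sub, lie_add, add_lie, lie_sub, sub_lie]
    try abel
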